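/- Let N+ be a rooted binary phylogenetic network on taxon set X, and suppose a set Q of four taxa determines a blob B of N+. Let Y ⊆ X be any subset containing Q which contains at least one taxon from each connected component, containing a taxon, of the graph obtained from N+ by deleting all nodes and edges of B. Then Q is a B-quartet on the induced network N+_Y. -/

import Mathlib

/-!
# Common framework

Finite directed multigraphs, undirected connectivity, numbers of connected
components, cut edges, subgraphs, blobs, blobs determined by leaf sets,
B-quartets, and quartets displayed via cut-edge separation.

A *network* is modelled as a finite directed multigraph (edge directions are
simply ignored for the undirected notions of connectivity, cut edges and
blobs).
-/

/-- A finite directed multigraph: finite types of nodes and of edges, with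
source and target maps. -/
structure MDigraph where
  V : Type
  E : Type
  finV : Finite V
  finE : Finite E
  src : E → V
  tgt : E → V

attribute [instance] MDigraph.finV MDigraph.finE

namespace MDigraph

section Basic

variable (G : MDigraph)

/-- One undirected step between `u` and `v` along an edge from the set `F`. -/
def Step (F : Set G.E) (u v : G.V) : Prop :=
  ∃ e ∈ F, (G.src e = u ∧ G.tgt e = v) ∨ (G.src e = v ∧ G.tgt e = u)

/-- Undirected reachability (an undirected path) using only edges in `F`. -/
def Conn (F : Set G.E) (u v : G.V) : Prop :=
  Relation.ReflTransGen (G.Step F) u v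

/-- One directed step from `u` to `v` along an edge from the set `F`. -/
def DStep (F : Set G.E) (u v : G.V) : Prop :=
  ∃ e ∈ F, G.src e = u ∧ G.tgt e = v

/-- Directed reachability (a directed path) using only edges in `F`. -/
def DConn (F : Set G.E) (u v : G.V) : Prop :=
  Relation.ReflTransGen (G.DStep F) u v

/-- `u` is above (ancestral to) `v`: there is a directed path from `u` to `v`. -/
def Above (u v : G.V) : Prop := G.DConn Set.univ u v

/-- In-degree of a node. -/
noncomputable def inDeg (v : G.V) : ℕ := Nat.card {e : G.E // G.tgt e = v}

/-- Out-degree of a node. -/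
noncomputable def outDeg (v : G.V) : ℕ := Nat.card {e : G.E // G.src e = v}

/-- Undirected degree of a node (a loop counts twice). -/
noncomputable def degree (v : G.V) : ℕ := G.inDeg v + G.outDeg v

/-- The number of connected components of the graph with node set `W` and edge
set the restriction to `W` of `F` (two nodes of `W` lie in the same connected
component iff they are joined by an undirected path). -/
noncomputable def numComponents (W : Set G.V) (F : Set G.E) : ℕ :=
  Nat.card (Quot (fun u v : W => G.Step {e ∈ F | G.src e ∈ W ∧ G.tgt e ∈ W} u.1 v.1))

/-- `v` lies on every directed path from `u` to `w`: there is no directed path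
from `u` to `w` all of whose nodes avoid `v`. -/
def OnEveryPath (v u w : G.V) : Prop :=
  ¬ (u ≠ v ∧ w ≠ v ∧
      Relation.ReflTransGen (fun a b => G.DStep Set.univ a b ∧ a ≠ v ∧ b ≠ v) u w)

end Basic

/-- A subgraph (subnetwork): a set of nodes together with a set of edges
joining them. -/
structure Subgraph (G : MDigraph) where
  verts : Set G.V
  edges : Set G.E
  src_mem : ∀ e ∈ edges, G.src e ∈ verts
  tgt_mem : ∀ e ∈ edges, G.tgt e ∈ verts

/-- The whole graph, as a subgraph of itself. -/
def top (G : MDigraph) : Subgraph G :=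
  ⟨Set.univ, Set.univ, fun _ _ => Set.mem_univ _, fun _ _ => Set.mem_univ _⟩

namespace Subgraph

variable {G : MDigraph}

/-- Containment of subgraphs. -/
def le (H K : Subgraph G) : Prop := H.verts ⊆ K.verts ∧ H.edges ⊆ K.edges

/-- The subgraph `H` is connected. -/
def IsConnected (H : Subgraph G) : Prop :=
  H.verts.Nonempty ∧ ∀ u ∈ H.verts, ∀ v ∈ H.verts, G.Conn H.edges u v

/-- Delete an edge from a subgraph. -/
def deleteEdge (H : Subgraph G) (e : G.E) : Subgraph G :=
  ⟨H.verts, H.edges \ {e}, fun e' he' => H.src_mem e' he'.1,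
    fun e' he' => H.tgt_mem e' he'.1⟩

/-- The number of connected components of a subgraph. -/
noncomputable def numComponents (H : Subgraph G) : ℕ :=
  G.numComponents H.verts H.edges

/-- `e` is a cut edge of the (sub)graph `H`: deleting it increases the number
of connected components. -/
def IsCutEdge (H : Subgraph G) (e : G.E) : Prop :=
  e ∈ H.edges ∧ H.numComponents < (H.deleteEdge e).numComponents

end Subgraph

variable {G : MDigraph}

/-- `B` is a blob of the network `H`: a maximal connected subnetwork of `H`
having no cut edges.  (A blob is *trivial* if it consists of a single node.) -/
def IsBlobIn (H B : Subgraph G) : Prop :=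
  B.le H ∧ B.IsConnected ∧ (∀ e, ¬ B.IsCutEdge e) ∧
    ∀ B' : Subgraph G, B'.le H → B'.IsConnected → (∀ e, ¬ B'.IsCutEdge e) →
      B.le B' → B'.le B

/-- `e` is a cut edge of the network `H` incident to the blob `B`: exactly one
of its endpoints is a node of `B`. -/
def IncidentCut (H B : Subgraph G) (e : G.E) : Prop :=
  H.IsCutEdge e ∧ Xor' (G.src e ∈ B.verts) (G.tgt e ∈ B.verts)

/-- The blob `B` of the network `H` is determined by the set `S` of leaf
labels: deletion of the cut edges of `H` incident to `B` leaves the nodes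
labelled by the elements of `S` in distinct connected components. -/
def DeterminesIn {X : Type} (H B : Subgraph G) (leaf : X → G.V) (S : Set X) : Prop :=
  ∀ s ∈ S, ∀ t ∈ S, s ≠ t →
    ¬ G.Conn {e ∈ H.edges | ¬ IncidentCut H B e} (leaf s) (leaf t)

/-- Four taxa form a B-quartet on the network `H`: some blob of `H` is
determined by them. -/
def BQuartetIn {X : Type} (H : Subgraph G) (leaf : X → G.V) (a b c d : X) : Prop :=
  ∃ B : Subgraph G, IsBlobIn H B ∧ DeterminesIn H B leaf ({a, b, c, d} : Set X)

/-- Some cut edge of `H` separates the taxa `p, q` from the taxa `r, s`: after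
its deletion `p, q` lie in one connected component and `r, s` in another.  For
a 4-taxon set `{p,q,r,s}` this says exactly that the (reduced unrooted) tree of
blobs of `H` displays the resolved quartet `pq|rs` (the edges of the tree of
blobs correspond exactly to the cut edges of the network, and suppressing
degree-2 nodes or contracting blobs does not affect which taxa a cut edge
separates). -/
def CutSep {X : Type} (H : Subgraph G) (leaf : X → G.V) (p q r s : X) : Prop :=
  ∃ e, H.IsCutEdge e ∧
    G.Conn (H.edges \ {e}) (leaf p) (leaf q) ∧
    G.Conn (H.edges \ {e}) (leaf r) (leaf s) ∧
    ¬ G.Conn (H.edges \ {e}) (leaf p) (leaf r)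

end MDigraph
open MDigraph in
/-- A rooted binary phylogenetic network on the taxon set `X`: a connected
directed acyclic graph whose node set consists of a root (in-degree 0,
out-degree 2), leaves (in-degree 1, out-degree 0) bijectively labelled by `X`,
tree nodes (in-degree 1, out-degree 2) and hybrid nodes (in-degree 2,
out-degree 1). -/
structure PhyloNetwork (X : Type) extends MDigraph where
  root : toMDigraph.V
  leaf : X → toMDigraph.V
  leaf_inj : Function.Injective leaf
  root_in : toMDigraph.inDeg root = 0
  root_out : toMDigraph.outDeg root = 2
  leaf_in : ∀ x, toMDigraph.inDeg (leaf x) = 1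
  leaf_out : ∀ x, toMDigraph.outDeg (leaf x) = 0
  internal : ∀ v, v ≠ root → (∀ x, v ≠ leaf x) →
      (toMDigraph.inDeg v = 1 ∧ toMDigraph.outDeg v = 2) ∨
      (toMDigraph.inDeg v = 2 ∧ toMDigraph.outDeg v = 1)
  acyclic : ∀ v, ¬ Relation.TransGen (toMDigraph.DStep Set.univ) v v
  conn : ∀ u v, toMDigraph.Conn Set.univ u v

namespace PhyloNetwork

open MDigraph

variable {X : Type} (N : PhyloNetwork X)

/-- The subnetwork of `N⁺` consisting of all nodes and edges ancestral to at
least one taxon in `Y`.  Since suppressing nodes of in- and out-degree 1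
affects neither blobs, nor cut edges, nor which sets of taxa they separate,
this subnetwork faithfully represents the induced network `N⁺_Y`. -/
def inducedSub (Y : Set X) : Subgraph N.toMDigraph where
  verts := {v | ∃ y ∈ Y, N.toMDigraph.Above v (N.leaf y)}
  edges := {e | ∃ y ∈ Y, N.toMDigraph.Above (N.toMDigraph.tgt e) (N.leaf y)}
  src_mem := by
    rintro e ⟨y, hy, h⟩
    exact ⟨y, hy, Relation.ReflTransGen.head ⟨e, Set.mem_univ e, rfl, rfl⟩ h⟩
  tgt_mem := by
    rintro e ⟨y, hy, h⟩
    exact ⟨y, hy, h⟩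

/-- `v` is a stable ancestor of the leaves: it is ancestral to every leaf and
lies on every directed path from the root to any leaf. -/
def IsStableAncestor (v : N.toMDigraph.V) : Prop :=
  (∀ x, N.toMDigraph.Above v (N.leaf x)) ∧
  ∀ x, N.toMDigraph.OnEveryPath v N.root (N.leaf x)

/-- `v` is the lowest stable ancestor (LSA) of the network: a stable ancestor
below all stable ancestors. -/
def IsLSA (v : N.toMDigraph.V) : Prop :=
  N.IsStableAncestor v ∧ ∀ u, N.IsStableAncestor u → N.toMDigraph.Above u v

/-- The number of cut edges of `N⁺` incident to the blob `B`. -/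
noncomputable def blobDeg (B : Subgraph N.toMDigraph) : ℕ :=
  Nat.card {e : N.toMDigraph.E // IncidentCut (top N.toMDigraph) B e}

/-- `B` is an `m`-blob of the rooted network `N⁺`: if the root is not in `B`
then `B` has exactly `m` incident cut edges, while if the root is in `B` then
`B` has exactly `m - 1` incident cut edges. -/
def IsMBlob (B : Subgraph N.toMDigraph) (m : ℕ) : Prop :=
  IsBlobIn (top N.toMDigraph) B ∧
    ((N.root ∈ B.verts ∧ m = N.blobDeg B + 1) ∨ (N.root ∉ B.verts ∧ m = N.blobDeg B))

end PhyloNetwork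

open MDigraph


namespace MDigraph
variable {G : MDigraph}
lemma Step.symm {F : Set G.E} {u v : G.V} (h : G.Step F u v) : G.Step F v u := by
  obtain ⟨e, he, h⟩ := h; exact ⟨e, he, h.symm⟩

lemma Step.mono {F F' : Set G.E} (hFF : F ⊆ F') {u v : G.V} (h : G.Step F u v) :
    G.Step F' u v := by
  obtain ⟨e, he, h⟩ := h; exact ⟨e, hFF he, h⟩

lemma Conn.symm {F : Set G.E} {u v : G.V} (h : G.Conn F u v) : G.Conn F v u :=
  by
    induction h with
    | refl => exact Relation.ReflTransGen.refl
    | tail _ hs ih => exact Relation.ReflTransGen.head (Step.symm hs) ih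

lemma Conn.trans {F : Set G.E} {u v w : G.V} (h : G.Conn F u v) (h' : G.Conn F v w) :
    G.Conn F u w := Relation.ReflTransGen.trans h h'

lemma Conn.mono {F F' : Set G.E} (hFF : F ⊆ F') {u v : G.V} (h : G.Conn F u v) :
    G.Conn F' u v := by
  induction h with
  | refl => exact Relation.ReflTransGen.refl
  | tail _ hstep ih => exact ih.tail (hstep.mono hFF)

/-- Walks as lists of edges. -/
def IsWalk (F : Set G.E) : G.V → G.V → List G.E → Prop
  | u, w, [] => u = w
  | u, w, e :: l => e ∈ F ∧ ∃ m, ((G.src e = u ∧ G.tgt e = m) ∨ (G.src e = m ∧ G.tgt e = u))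
      ∧ IsWalk F m w l

lemma IsWalk.mem_of {F : Set G.E} {u w : G.V} {l : List G.E} (h : IsWalk F u w l) :
    ∀ g ∈ l, g ∈ F := by
  induction l generalizing u with
  | nil => intro g hg; cases hg
  | cons e l ih =>
    obtain ⟨he, m, _, hw⟩ := h
    intro g hg
    rcases List.mem_cons.1 hg with rfl | hg
    · exact he
    · exact ih hw g hg

lemma conn_of_walk {F : Set G.E} {u w : G.V} {l : List G.E} (h : IsWalk F u w l) :
    G.Conn F u w := by
  induction l generalizing u with
  | nil => cases h; exact Relation.ReflTransGen.refl
  | cons e l ih =>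
    obtain ⟨he, m, hor, hw⟩ := h
    exact Relation.ReflTransGen.head ⟨e, he, hor⟩ (ih hw)

lemma conn_of_walk_mem {F : Set G.E} {u w : G.V} {l : List G.E} (h : IsWalk F u w l) :
    G.Conn {g | g ∈ l} u w := by
  induction l generalizing u with
  | nil => cases h; exact Relation.ReflTransGen.refl
  | cons e l ih =>
    obtain ⟨he, m, hor, hw⟩ := h
    refine Relation.ReflTransGen.head ⟨e, List.mem_cons_self, hor⟩ ?_
    exact (ih hw).mono (fun g hg => List.mem_cons_of_mem _ hg)

lemma walk_of_conn {F : Set G.E} {u w : G.V} (h : G.Conn F u w) :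
    ∃ l, IsWalk F u w l := by
  induction h using Relation.ReflTransGen.head_induction_on with
  | refl => exact ⟨[], rfl⟩
  | head hstep _ ih =>
    obtain ⟨l, hl⟩ := ih
    obtain ⟨e, he, hor⟩ := hstep
    exact ⟨e :: l, he, _, hor, hl⟩

lemma IsWalk.append_iff {F : Set G.E} {u w : G.V} {s t : List G.E} :
    IsWalk F u w (s ++ t) ↔ ∃ m, IsWalk F u m s ∧ IsWalk F m w t := by
  induction s generalizing u with
  | nil =>
    simp only [List.nil_append]
    exact ⟨fun h => ⟨u, rfl, h⟩, fun ⟨m, hm, h⟩ => by cases hm; exact h⟩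
  | cons e s ih =>
    constructor
    · rintro ⟨he, m, hor, hw⟩
      obtain ⟨m', h1, h2⟩ := ih.1 hw
      exact ⟨m', ⟨he, m, hor, h1⟩, h2⟩
    · rintro ⟨m', ⟨he, m, hor, h1⟩, h2⟩
      exact ⟨he, m, hor, ih.2 ⟨m', h1, h2⟩⟩

lemma walk_nodup {F : Set G.E} {u w : G.V} {l : List G.E} (h : IsWalk F u w l) :
    ∃ l', IsWalk F u w l' ∧ l'.Nodup := by
  induction l generalizing u with
  | nil => exact ⟨[], h, List.nodup_nil⟩
  | cons e l ih =>
    obtain ⟨he, m, hor, hw⟩ := h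
    obtain ⟨l', hl', hnd⟩ := ih hw
    by_cases hel : e ∈ l'
    · obtain ⟨s, t, rfl⟩ := List.append_of_mem hel
      have hnds : e ∉ s := by
        intro hes
        exact (List.disjoint_of_nodup_append hnd) hes (List.mem_cons_self)
      have hndt : e ∉ t := by
        have := (List.nodup_append.1 hnd).2.1
        exact (List.nodup_cons.1 this).1
      obtain ⟨α, h1, h2⟩ := IsWalk.append_iff.1 hl'
      obtain ⟨_, β, hor2, h3⟩ := h2
      have hndt' : t.Nodup := by
        have := (List.nodup_append.1 hnd).2.1
        exact (List.nodup_cons.1 this).2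
      -- β is u or m
      rcases hor with ⟨hsu, htm⟩ | ⟨hsm, htu⟩ <;> rcases hor2 with ⟨hsa, htb⟩ | ⟨hsb, hta⟩
      · have hbm : β = m := htb.symm.trans htm
        exact ⟨e :: t, ⟨he, m, Or.inl ⟨hsu, htm⟩, hbm ▸ h3⟩, List.nodup_cons.2 ⟨hndt, hndt'⟩⟩
      · have hbu : β = u := hsb.symm.trans hsu
        exact ⟨t, hbu ▸ h3, hndt'⟩
      · have hbu : β = u := htb.symm.trans htu
        exact ⟨t, hbu ▸ h3, hndt'⟩
      · have hbm : β = m := hsb.symm.trans hsm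
        exact ⟨e :: t, ⟨he, m, Or.inr ⟨hsm, htu⟩, hbm ▸ h3⟩, List.nodup_cons.2 ⟨hndt, hndt'⟩⟩
    · exact ⟨e :: l', ⟨he, m, hor, hl'⟩, List.nodup_cons.2 ⟨hel, hnd⟩⟩

lemma walk_conn_endpoints {F : Set G.E} {c1 c2 : G.V} {l : List G.E}
    (h : IsWalk F c1 c2 l) {g : G.E} (hg : g ∈ l) :
    G.Conn {h | h ∈ l} c1 (G.src g) ∧ G.Conn {h | h ∈ l} c1 (G.tgt g) := by
  induction l generalizing c1 with
  | nil => cases hg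
  | cons e l ih =>
    obtain ⟨he, m, hor, hw⟩ := h
    have hstep : G.Step {h | h ∈ e :: l} c1 m := ⟨e, List.mem_cons_self, by tauto⟩
    rcases List.mem_cons.1 hg with rfl | hg
    · rcases hor with ⟨hs, ht⟩ | ⟨hs, ht⟩
      · exact ⟨hs ▸ Relation.ReflTransGen.refl, ht ▸ Relation.ReflTransGen.single hstep⟩
      · exact ⟨hs ▸ Relation.ReflTransGen.single hstep, ht ▸ Relation.ReflTransGen.refl⟩
    · have := ih hw hg
      have hmono : ∀ {x y}, G.Conn {h | h ∈ l} x y → G.Conn {h | h ∈ e :: l} x y :=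
        fun h => h.mono (fun g hg => List.mem_cons_of_mem _ hg)
      exact ⟨(Relation.ReflTransGen.single hstep).trans (hmono this.1),
        (Relation.ReflTransGen.single hstep).trans (hmono this.2)⟩

lemma eqvGen_to_conn {F : Set G.E} {W : Set G.V} {u v : W}
    (h : Relation.EqvGen (fun a b : W => G.Step F a.1 b.1) u v) : G.Conn F u.1 v.1 := by
  induction h with
  | rel _ _ h => exact Relation.ReflTransGen.single h
  | refl => exact Relation.ReflTransGen.refl
  | symm _ _ _ ih => exact ih.symm
  | trans _ _ _ _ _ ih1 ih2 => exact ih1.trans ih2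

lemma conn_to_eqvGen {F : Set G.E} {W : Set G.V}
    (hF : ∀ e ∈ F, G.src e ∈ W ∧ G.tgt e ∈ W) {a b : G.V} (h : G.Conn F a b)
    (ha : a ∈ W) (hb : b ∈ W) :
    Relation.EqvGen (fun x y : W => G.Step F x.1 y.1) ⟨a, ha⟩ ⟨b, hb⟩ := by
  induction h with
  | refl => exact Relation.EqvGen.refl _
  | @tail m c hsteps hstep ih =>
    have hm : m ∈ W := by
      obtain ⟨e, he, hor⟩ := hstep
      rcases hor with ⟨hs, _⟩ | ⟨_, ht⟩
      · exact hs ▸ (hF e he).1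
      · exact ht ▸ (hF e he).2
    exact Relation.EqvGen.trans _ _ _ (ih hm)
      (Relation.EqvGen.rel (⟨m, hm⟩ : W) ⟨c, hb⟩ hstep)

lemma Subgraph.numComponents_eq (K : Subgraph G) :
    K.numComponents = Nat.card (Quot (fun u v : K.verts => G.Step K.edges u.1 v.1)) := by
  have hset : {e ∈ K.edges | G.src e ∈ K.verts ∧ G.tgt e ∈ K.verts} = K.edges :=
    Set.ext fun e => ⟨fun h => h.1, fun h => ⟨h, K.src_mem e h, K.tgt_mem e h⟩⟩
  unfold Subgraph.numComponents MDigraph.numComponents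
  rw [hset]

lemma conn_patch {F : Set G.E} {e : G.E}
    (hconn : G.Conn (F \ {e}) (G.src e) (G.tgt e)) {x y : G.V}
    (h : G.Conn F x y) : G.Conn (F \ {e}) x y := by
  induction h with
  | refl => exact Relation.ReflTransGen.refl
  | tail _ hstep ih =>
    obtain ⟨g, hg, hor⟩ := hstep
    by_cases hge : g = e
    · subst hge
      rcases hor with ⟨hs, ht⟩ | ⟨hs, ht⟩
      · exact ih.trans (hs ▸ ht ▸ hconn)
      · exact ih.trans (hs ▸ ht ▸ hconn.symm)
    · exact ih.tail ⟨g, ⟨hg, hge⟩, hor⟩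

lemma cutEdge_iff (K : Subgraph G) {e : G.E} (he : e ∈ K.edges) :
    K.IsCutEdge e ↔ ¬ G.Conn (K.edges \ {e}) (G.src e) (G.tgt e) := by
  have hsrcW : G.src e ∈ K.verts := K.src_mem e he
  have htgtW : G.tgt e ∈ K.verts := K.tgt_mem e he
  set R : K.verts → K.verts → Prop := fun u v => G.Step K.edges u.1 v.1 with hR
  set R' : K.verts → K.verts → Prop := fun u v => G.Step (K.edges \ {e}) u.1 v.1 with hR'
  have hRsub : ∀ u v, R' u v → R u v := fun u v h => h.mono Set.diff_subset
  let f : Quot R' → Quot R := Quot.map id hRsub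
  have hf_mk : ∀ u : K.verts, f (Quot.mk R' u) = Quot.mk R u := fun u => rfl
  have hf_surj : Function.Surjective f := by
    intro q
    induction q using Quot.ind with
    | _ u => exact ⟨Quot.mk R' u, rfl⟩
  haveI : Finite (Quot R') := Finite.of_surjective (Quot.mk R') Quot.mk_surjective
  haveI : Finite (Quot R) := Finite.of_surjective (Quot.mk R) Quot.mk_surjective
  have hF : ∀ g ∈ K.edges, G.src g ∈ K.verts ∧ G.tgt g ∈ K.verts :=
    fun g hg => ⟨K.src_mem g hg, K.tgt_mem g hg⟩
  have hF' : ∀ g ∈ K.edges \ {e}, G.src g ∈ K.verts ∧ G.tgt g ∈ K.verts :=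
    fun g hg => hF g hg.1
  have key1 : ∀ u v : K.verts, Quot.mk R u = Quot.mk R v ↔ G.Conn K.edges u.1 v.1 := by
    intro u v
    rw [Quot.eq]
    exact ⟨eqvGen_to_conn, fun h => conn_to_eqvGen hF h u.2 v.2⟩
  have key2 : ∀ u v : K.verts, Quot.mk R' u = Quot.mk R' v ↔ G.Conn (K.edges \ {e}) u.1 v.1 := by
    intro u v
    rw [Quot.eq]
    exact ⟨eqvGen_to_conn, fun h => conn_to_eqvGen hF' h u.2 v.2⟩
  have hnum : K.numComponents = Nat.card (Quot R) := K.numComponents_eq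
  have hnum' : (K.deleteEdge e).numComponents = Nat.card (Quot R') :=
    (K.deleteEdge e).numComponents_eq
  constructor
  · intro hcut hconn
    have hinj : Function.Injective f := by
      have key : ∀ u v : K.verts, f (Quot.mk R' u) = f (Quot.mk R' v) →
          Quot.mk R' u = Quot.mk R' v := by
        intro u v hfe
        rw [hf_mk, hf_mk] at hfe
        exact (key2 u v).2 (conn_patch hconn ((key1 u v).1 hfe))
      intro q1 q2
      induction q1 using Quot.ind with
      | _ u =>
        induction q2 using Quot.ind with
        | _ v => exact key u v
    have hcard : Nat.card (Quot R') = Nat.card (Quot R) :=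
      Nat.card_eq_of_bijective f ⟨hinj, hf_surj⟩
    have := hcut.2
    rw [hnum, hnum'] at this
    omega
  · intro hnc
    refine ⟨he, ?_⟩
    rw [hnum, hnum']
    have hle : Nat.card (Quot R) ≤ Nat.card (Quot R') :=
      Nat.card_le_card_of_surjective f hf_surj
    refine lt_of_le_of_ne hle ?_
    intro hEq
    have hbij : Function.Bijective f :=
      (Nat.bijective_iff_surjective_and_card f).2 ⟨hf_surj, hEq.symm⟩
    have h1 : f (Quot.mk R' ⟨G.src e, hsrcW⟩) = f (Quot.mk R' ⟨G.tgt e, htgtW⟩) := by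
      rw [hf_mk, hf_mk]
      exact (key1 _ _).2 (Relation.ReflTransGen.single ⟨e, he, Or.inl ⟨rfl, rfl⟩⟩)
    exact hnc ((key2 _ _).1 (hbij.1 h1))

/-- A non-cut edge of a bridgeless subgraph has its endpoints connected after deletion. -/
lemma conn_of_not_cut (K : Subgraph G) {e : G.E} (he : e ∈ K.edges)
    (h : ¬ K.IsCutEdge e) : G.Conn (K.edges \ {e}) (G.src e) (G.tgt e) := by
  by_contra hc
  exact h ((cutEdge_iff K he).2 hc)

lemma not_cut_of_conn (K : Subgraph G) {e : G.E}
    (h : G.Conn (K.edges \ {e}) (G.src e) (G.tgt e)) : ¬ K.IsCutEdge e := by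
  intro hcut
  exact ((cutEdge_iff K hcut.1).1 hcut) h

lemma Subgraph.le_top (K : Subgraph G) : K.le (top G) :=
  ⟨Set.subset_univ _, Set.subset_univ _⟩

section Blob

variable (B : Subgraph G)

/-- One step in the graph obtained by deleting the blob `B`. -/
def OutStep (u w : G.V) : Prop :=
  G.Step {e | e ∉ B.edges} u w ∧ u ∉ B.verts ∧ w ∉ B.verts

/-- Connectivity in the graph obtained by deleting the blob `B`. -/
def OutConn : G.V → G.V → Prop := Relation.ReflTransGen (OutStep B)

variable {B}

lemma OutStep.symm {u w : G.V} (h : OutStep B u w) : OutStep B w u :=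
  ⟨Step.symm h.1, h.2.2, h.2.1⟩

lemma OutConn.symm {u w : G.V} (h : OutConn B u w) : OutConn B w u :=
  by
    induction h with
    | refl => exact Relation.ReflTransGen.refl
    | tail _ hs ih => exact Relation.ReflTransGen.head (OutStep.symm hs) ih

lemma OutConn.trans {u v w : G.V} (h : OutConn B u v) (h' : OutConn B v w) :
    OutConn B u w := Relation.ReflTransGen.trans h h'

lemma OutConn.not_mem {u w : G.V} (h : OutConn B u w) (hu : u ∉ B.verts) :
    w ∉ B.verts := by
  induction h with
  | refl => exact hu
  | tail _ hstep _ => exact hstep.2.2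

lemma outStep_of_dstep {u w : G.V} (hstep : G.DStep Set.univ u w)
    (hu : u ∉ B.verts) (hw : w ∉ B.verts) : OutStep B u w := by
  obtain ⟨g, _, hs, ht⟩ := hstep
  have hgB : g ∉ B.edges := fun hgB => hu (hs ▸ B.src_mem g hgB)
  exact ⟨⟨g, hgB, Or.inl ⟨hs, ht⟩⟩, hu, hw⟩

/-- A directed path ending outside `B` either stays outside `B`, or makes a
last exit from `B` through an edge from `B` to the outside. -/
lemma dconn_exit {u w : G.V} (h : G.DConn Set.univ u w) (hw : w ∉ B.verts) :
    (u ∉ B.verts ∧ OutConn B u w) ∨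
    ∃ e, G.src e ∈ B.verts ∧ G.tgt e ∉ B.verts ∧ OutConn B (G.tgt e) w ∧
      G.DConn Set.univ u (G.tgt e) ∧ G.DConn Set.univ (G.tgt e) w := by
  induction h using Relation.ReflTransGen.head_induction_on with
  | refl => exact Or.inl ⟨hw, Relation.ReflTransGen.refl⟩
  | @head a m hstep hrest ih =>
    rcases ih with ⟨hm, hconn⟩ | ⟨e, h1, h2, h3, h4, h5⟩
    · by_cases ha : a ∈ B.verts
      · obtain ⟨g, _, hs, ht⟩ := hstep
        exact Or.inr ⟨g, hs ▸ ha, ht ▸ hm, ht ▸ hconn,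
          Relation.ReflTransGen.single ⟨g, Set.mem_univ g, hs, rfl⟩, ht ▸ hrest⟩
      · exact Or.inl ⟨ha, Relation.ReflTransGen.head (outStep_of_dstep hstep ha hm) hconn⟩
    · exact Or.inr ⟨e, h1, h2, h3, Relation.ReflTransGen.head hstep h4, h5⟩

/-- A directed path starting outside `B` either stays outside `B`, or makes a
first entry into `B` through an edge from the outside into `B`. -/
lemma dconn_enter {u w : G.V} (h : G.DConn Set.univ u w) (hu : u ∉ B.verts) :
    (w ∉ B.verts ∧ OutConn B u w) ∨
    ∃ e, G.tgt e ∈ B.verts ∧ G.src e ∉ B.verts ∧ OutConn B u (G.src e) := by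
  induction h with
  | refl => exact Or.inl ⟨hu, Relation.ReflTransGen.refl⟩
  | @tail m c hsteps hstep ih =>
    rcases ih with ⟨hm, hconn⟩ | he
    · by_cases hc : c ∈ B.verts
      · obtain ⟨g, _, hs, ht⟩ := hstep
        exact Or.inr ⟨g, ht ▸ hc, hs ▸ hm, hs ▸ hconn⟩
      · exact Or.inl ⟨hc, hconn.tail (outStep_of_dstep hstep hm hc)⟩
    · exact Or.inr he

lemma outConn_to_conn {u w : G.V} (h : OutConn B u w) :
    G.Conn {e | G.src e ∉ B.verts ∧ G.tgt e ∉ B.verts} u w := by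
  induction h with
  | refl => exact Relation.ReflTransGen.refl
  | tail _ hstep ih =>
    obtain ⟨⟨g, _, hor⟩, hu, hw⟩ := hstep
    refine ih.tail ⟨g, ?_, hor⟩
    rcases hor with ⟨hs, ht⟩ | ⟨hs, ht⟩
    · exact ⟨hs ▸ hu, ht ▸ hw⟩
    · exact ⟨hs ▸ hw, ht ▸ hu⟩

/-- Uniqueness of the attachment edge: two edges joining the blob `B` to the
same connected component of the complement of `B` coincide. -/
lemma att_unique (hB : IsBlobIn (top G) B) {e1 e2 : G.E} {b1 c1 b2 c2 : G.V}
    (ho1 : (G.src e1 = b1 ∧ G.tgt e1 = c1) ∨ (G.src e1 = c1 ∧ G.tgt e1 = b1))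
    (hb1 : b1 ∈ B.verts) (hc1 : c1 ∉ B.verts)
    (ho2 : (G.src e2 = b2 ∧ G.tgt e2 = c2) ∨ (G.src e2 = c2 ∧ G.tgt e2 = b2))
    (hb2 : b2 ∈ B.verts) (hc2 : c2 ∉ B.verts)
    (hcc : OutConn B c1 c2) : e1 = e2 := by
  by_contra hne
  -- a walk from c1 to c2 through edges avoiding B
  have hEC : G.Conn {e | G.src e ∉ B.verts ∧ G.tgt e ∉ B.verts} c1 c2 :=
    outConn_to_conn hcc
  obtain ⟨l0, hl0⟩ := walk_of_conn hEC
  obtain ⟨l, hl, hnd⟩ := walk_nodup hl0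
  have hlEC : ∀ g ∈ l, G.src g ∉ B.verts ∧ G.tgt g ∉ B.verts := IsWalk.mem_of hl
  have hlB : ∀ g ∈ l, g ∉ B.edges := fun g hg hgB => (hlEC g hg).1 (B.src_mem g hgB)
  have he1B : e1 ∉ B.edges := by
    intro hmem
    rcases ho1 with ⟨_, ht⟩ | ⟨hs, _⟩
    · exact hc1 (ht ▸ B.tgt_mem e1 hmem)
    · exact hc1 (hs ▸ B.src_mem e1 hmem)
  have he2B : e2 ∉ B.edges := by
    intro hmem
    rcases ho2 with ⟨_, ht⟩ | ⟨hs, _⟩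
    · exact hc2 (ht ▸ B.tgt_mem e2 hmem)
    · exact hc2 (hs ▸ B.src_mem e2 hmem)
  have he1l : e1 ∉ l := by
    intro hmem
    rcases ho1 with ⟨hs, _⟩ | ⟨_, ht⟩
    · exact (hlEC e1 hmem).1 (hs ▸ hb1)
    · exact (hlEC e1 hmem).2 (ht ▸ hb1)
  have he2l : e2 ∉ l := by
    intro hmem
    rcases ho2 with ⟨hs, _⟩ | ⟨_, ht⟩
    · exact (hlEC e2 hmem).1 (hs ▸ hb2)
    · exact (hlEC e2 hmem).2 (ht ▸ hb2)
  set VS : Set G.V := B.verts ∪ {z | z = c1 ∨ z = c2 ∨ ∃ g ∈ l, z = G.src g ∨ z = G.tgt g}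
    with hVS
  set ES : Set G.E := (B.edges ∪ {e1, e2}) ∪ {g | g ∈ l} with hES
  have hsrc_mem : ∀ e ∈ ES, G.src e ∈ VS := by
    intro e hmem
    rcases hmem with (hmem | hmem) | hmem
    · exact Or.inl (B.src_mem e hmem)
    · rcases hmem with rfl | rfl
      · rcases ho1 with ⟨hs, _⟩ | ⟨hs, _⟩
        · exact Or.inl (hs ▸ hb1)
        · exact Or.inr (Or.inl hs)
      · rcases ho2 with ⟨hs, _⟩ | ⟨hs, _⟩
        · exact Or.inl (hs ▸ hb2)
        · exact Or.inr (Or.inr (Or.inl hs))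
    · exact Or.inr (Or.inr (Or.inr ⟨e, hmem, Or.inl rfl⟩))
  have htgt_mem : ∀ e ∈ ES, G.tgt e ∈ VS := by
    intro e hmem
    rcases hmem with (hmem | hmem) | hmem
    · exact Or.inl (B.tgt_mem e hmem)
    · rcases hmem with rfl | rfl
      · rcases ho1 with ⟨_, ht⟩ | ⟨_, ht⟩
        · exact Or.inr (Or.inl ht)
        · exact Or.inl (ht ▸ hb1)
      · rcases ho2 with ⟨_, ht⟩ | ⟨_, ht⟩
        · exact Or.inr (Or.inr (Or.inl ht))
        · exact Or.inl (ht ▸ hb2)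
    · exact Or.inr (Or.inr (Or.inr ⟨e, hmem, Or.inr rfl⟩))
  set B' : Subgraph G := ⟨VS, ES, hsrc_mem, htgt_mem⟩ with hB'
  have he1ES : e1 ∈ ES := Or.inl (Or.inr (Or.inl rfl))
  have he2ES : e2 ∈ ES := Or.inl (Or.inr (Or.inr rfl))
  have hlES : ∀ g ∈ l, g ∈ ES := fun g hg => Or.inr hg
  have hBES : B.edges ⊆ ES := fun g hg => Or.inl (Or.inl hg)
  -- connections towards b1
  have hstep1 : G.Step ES c1 b1 := ⟨e1, he1ES, by tauto⟩
  have hstep2 : G.Step ES c2 b2 := ⟨e2, he2ES, by tauto⟩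
  have hBconn : ∀ x ∈ B.verts, ∀ y ∈ B.verts, G.Conn ES x y :=
    fun x hx y hy => (hB.2.1.2 x hx y hy).mono hBES
  have hto : ∀ z ∈ VS, G.Conn ES z b1 := by
    intro z hz
    rcases hz with hz | hz | hz | ⟨g, hg, hz⟩
    · exact hBconn z hz b1 hb1
    · exact hz ▸ Relation.ReflTransGen.single hstep1
    · refine hz ▸ (Relation.ReflTransGen.single hstep2).trans ?_
      exact hBconn b2 hb2 b1 hb1
    · have hwce := walk_conn_endpoints hl hg
      have hcz : G.Conn ES c1 z := by
        rcases hz with rfl | rfl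
        · exact hwce.1.mono (fun x hx => hlES x hx)
        · exact hwce.2.mono (fun x hx => hlES x hx)
      exact hcz.symm.trans (Relation.ReflTransGen.single hstep1)
  have hconn' : B'.IsConnected := by
    refine ⟨⟨b1, Or.inl hb1⟩, fun x hx y hy => ?_⟩
    exact (hto x hx).trans (hto y hy).symm
  have hsubB : ∀ f, f ∉ B.edges → B.edges ⊆ ES \ {f} :=
    fun f hf g hg => ⟨hBES hg, fun h => hf (Set.mem_singleton_iff.1 h ▸ hg)⟩
  have hsubl : ∀ f, f ∉ l → {g | g ∈ l} ⊆ ES \ {f} :=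
    fun f hf g hg => ⟨hlES g hg, fun h => hf (Set.mem_singleton_iff.1 h ▸ hg)⟩
  have hnocut : ∀ f, ¬ B'.IsCutEdge f := by
    intro f hcut
    refine not_cut_of_conn B' ?_ hcut
    have hf : f ∈ ES := hcut.1
    rcases hf with (hf | hf) | hf
    · -- f an edge of B
      have := conn_of_not_cut B hf (hB.2.2.1 f)
      have hsub : B.edges \ {f} ⊆ ES \ {f} := fun g hg => ⟨hBES hg.1, hg.2⟩
      exact this.mono hsub
    · -- f = e1 or e2 : go around through the walk and the blob
      have hround : ∀ f', f' ∉ B.edges → f' ∉ l → f' ≠ e1 → f' ≠ e2 →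
          G.Conn (ES \ {f'}) c1 b1 ∧ G.Conn (ES \ {f'}) c2 b2 := by
        intro f' hfB hfl hfe1 hfe2
        have hs1 : G.Step (ES \ {f'}) c1 b1 :=
          ⟨e1, ⟨he1ES, fun h => hfe1 (Set.mem_singleton_iff.1 h).symm⟩, ho1.symm⟩
        have hs2 : G.Step (ES \ {f'}) c2 b2 :=
          ⟨e2, ⟨he2ES, fun h => hfe2 (Set.mem_singleton_iff.1 h).symm⟩, ho2.symm⟩
        exact ⟨Relation.ReflTransGen.single hs1, Relation.ReflTransGen.single hs2⟩
      rcases hf with rfl | rfl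
      · -- f = e1 : c1 ⇝ c2 (walk), c2 – b2 (e2), b2 ⇝ b1 (blob)
        have h1 : G.Conn (ES \ {f}) c1 c2 := (conn_of_walk_mem hl).mono (hsubl f he1l)
        have hs2 : G.Step (ES \ {f}) c2 b2 :=
          ⟨e2, ⟨he2ES, fun h => hne (Set.mem_singleton_iff.1 h).symm⟩, ho2.symm⟩
        have h3 : G.Conn (ES \ {f}) b2 b1 :=
          (hB.2.1.2 b2 hb2 b1 hb1).mono (hsubB f he1B)
        have hfin : G.Conn (ES \ {f}) c1 b1 :=
          (h1.trans (Relation.ReflTransGen.single hs2)).trans h3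
        rcases ho1 with ⟨hs, ht⟩ | ⟨hs, ht⟩
        · exact hs ▸ ht ▸ hfin.symm
        · exact hs ▸ ht ▸ hfin
      · -- f = e2
        have h1 : G.Conn (ES \ {f}) c2 c1 :=
          Conn.symm ((conn_of_walk_mem hl).mono (hsubl f he2l))
        have hs1 : G.Step (ES \ {f}) c1 b1 :=
          ⟨e1, ⟨he1ES, fun h => hne (Set.mem_singleton_iff.1 h)⟩, ho1.symm⟩
        have h3 : G.Conn (ES \ {f}) b1 b2 :=
          (hB.2.1.2 b1 hb1 b2 hb2).mono (hsubB f he2B)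
        have hfin : G.Conn (ES \ {f}) c2 b2 :=
          (h1.trans (Relation.ReflTransGen.single hs1)).trans h3
        rcases ho2 with ⟨hs, ht⟩ | ⟨hs, ht⟩
        · exact hs ▸ ht ▸ hfin.symm
        · exact hs ▸ ht ▸ hfin
    · -- f belongs to the walk
      obtain ⟨s, t, rfl⟩ := List.append_of_mem hf
      have hnds : f ∉ s := fun hfs =>
        (List.disjoint_of_nodup_append hnd) hfs (List.mem_cons_self)
      have hndt : f ∉ t := (List.nodup_cons.1 (List.nodup_append.1 hnd).2.1).1
      obtain ⟨α, hws, hwt⟩ := IsWalk.append_iff.1 hl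
      obtain ⟨hfEC', β, hor2, hwt'⟩ := hwt
      have hfB : f ∉ B.edges := hlB f hf
      have hfe1 : f ≠ e1 := fun h => he1l (h ▸ hf)
      have hfe2 : f ≠ e2 := fun h => he2l (h ▸ hf)
      have hsub : {g | g ∈ s} ⊆ ES \ {f} := fun g hg =>
        ⟨hlES g (List.mem_append_left _ hg), fun h => hnds (Set.mem_singleton_iff.1 h ▸ hg)⟩
      have hsub' : {g | g ∈ t} ⊆ ES \ {f} := fun g hg =>
        ⟨hlES g (List.mem_append_right _ (List.mem_cons_of_mem _ hg)),
          fun h => hndt (Set.mem_singleton_iff.1 h ▸ hg)⟩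
      have h1 : G.Conn (ES \ {f}) α c1 := Conn.symm ((conn_of_walk_mem hws).mono hsub)
      have hs1 : G.Step (ES \ {f}) c1 b1 :=
        ⟨e1, ⟨he1ES, fun h => hfe1 (Set.mem_singleton_iff.1 h).symm⟩, ho1.symm⟩
      have h3 : G.Conn (ES \ {f}) b1 b2 :=
        (hB.2.1.2 b1 hb1 b2 hb2).mono (hsubB f hfB)
      have hs4 : G.Step (ES \ {f}) c2 b2 :=
        ⟨e2, ⟨he2ES, fun h => hfe2 (Set.mem_singleton_iff.1 h).symm⟩, ho2.symm⟩
      have h5 : G.Conn (ES \ {f}) c2 β := Conn.symm ((conn_of_walk_mem hwt').mono hsub')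
      have hαβ : G.Conn (ES \ {f}) α β :=
        ((((h1.trans (Relation.ReflTransGen.single hs1)).trans h3).trans
          (Conn.symm (Relation.ReflTransGen.single hs4))).trans h5)
      rcases hor2 with ⟨hs2, ht2⟩ | ⟨hs2, ht2⟩
      · exact hs2 ▸ ht2 ▸ hαβ
      · exact hs2 ▸ ht2 ▸ hαβ.symm
  have hle : B'.le B := hB.2.2.2 B' B'.le_top hconn' hnocut
    ⟨fun z hz => Or.inl hz, hBES⟩
  exact hc1 (hle.1 (Or.inr (Or.inl rfl)))

end Blob

/-- The last edge of a nonempty walk is incident to the endpoint. -/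
lemma conn_last_edge {F : Set G.E} {u w : G.V} (h : G.Conn F u w) (hne : u ≠ w) :
    ∃ g ∈ F, G.src g = w ∨ G.tgt g = w := by
  rcases Relation.ReflTransGen.cases_tail h with heq | ⟨m, _, hstep⟩
  · exact absurd heq.symm hne
  · obtain ⟨g, hg, hor⟩ := hstep
    rcases hor with ⟨_, ht⟩ | ⟨hs, _⟩
    · exact ⟨g, hg, Or.inr ht⟩
    · exact ⟨g, hg, Or.inl hs⟩

/-- Splicing a degree-one vertex `x0` (with unique incident edge `e0`) out of
a walk between two vertices different from `x0`. -/
lemma splice {x0 : G.V} {e0 : G.E}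
    (hin : ∀ e, G.tgt e = x0 → e = e0) (hout : ∀ e, G.src e ≠ x0)
    (hxtgt : G.tgt e0 = x0) {u w : G.V} (h : G.Conn Set.univ u w) (hw : w ≠ x0) :
    (u = x0 → G.Conn (Set.univ \ {e0}) (G.src e0) w) ∧
    (u ≠ x0 → G.Conn (Set.univ \ {e0}) u w) := by
  induction h using Relation.ReflTransGen.head_induction_on with
  | refl => exact ⟨fun h' => absurd h' hw, fun _ => Relation.ReflTransGen.refl⟩
  | @head a m hstep hrest ih =>
    obtain ⟨g, _, hor⟩ := hstep
    constructor
    · intro hax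
      rcases hor with ⟨hs, ht⟩ | ⟨hs, ht⟩
      · exact absurd (hs.trans hax) (hout g)
      · have hge : g = e0 := hin g (ht.trans hax)
        have hm : m = G.src e0 := hge ▸ hs.symm
        have hmne : m ≠ x0 := hm ▸ hout e0
        exact hm ▸ ih.2 hmne
    · intro hane
      rcases hor with ⟨hs, ht⟩ | ⟨hs, ht⟩
      · by_cases hmx : m = x0
        · have hge : g = e0 := hin g (ht.trans hmx)
          have hau : a = G.src e0 := hge ▸ hs.symm
          exact hau ▸ ih.1 hmx
        · have hgne : g ≠ e0 := fun h' => hmx (ht ▸ h' ▸ hxtgt)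
          refine Relation.ReflTransGen.head
            ⟨g, ⟨Set.mem_univ g, fun h' => hgne (Set.mem_singleton_iff.1 h')⟩,
              Or.inl ⟨hs, ht⟩⟩ (ih.2 hmx)
      · have hmx : m ≠ x0 := hs ▸ hout g
        have hgne : g ≠ e0 := fun h' => hane (ht ▸ h' ▸ hxtgt)
        refine Relation.ReflTransGen.head
          ⟨g, ⟨Set.mem_univ g, fun h' => hgne (Set.mem_singleton_iff.1 h')⟩,
            Or.inr ⟨hs, ht⟩⟩ (ih.2 hmx)


end MDigraph

namespace PhyloNetwork

open MDigraph

variable {X : Type}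

lemma down_wf (N : PhyloNetwork X) :
    WellFounded (fun a b : N.toMDigraph.V => N.toMDigraph.DStep Set.univ b a) := by
  have h1 : IsTrans _ (Relation.TransGen
      (fun a b : N.toMDigraph.V => N.toMDigraph.DStep Set.univ b a)) :=
    ⟨fun _ _ _ h h' => h.trans h'⟩
  have h2 : IsIrrefl _ (Relation.TransGen
      (fun a b : N.toMDigraph.V => N.toMDigraph.DStep Set.univ b a)) :=
    ⟨fun a h => N.acyclic a (Relation.transGen_swap.1 h)⟩
  haveI := h1
  haveI := h2
  have h3 : WellFounded (Relation.TransGen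
      (fun a b : N.toMDigraph.V => N.toMDigraph.DStep Set.univ b a)) :=
    Finite.wellFounded_of_trans_of_irrefl _
  exact @Subrelation.wf _
    (Relation.TransGen (fun a b : N.toMDigraph.V => N.toMDigraph.DStep Set.univ b a))
    (fun a b : N.toMDigraph.V => N.toMDigraph.DStep Set.univ b a)
    (fun h => Relation.TransGen.single h) h3

lemma up_wf (N : PhyloNetwork X) : WellFounded (N.toMDigraph.DStep Set.univ) := by
  have h1 : IsTrans _ (Relation.TransGen (N.toMDigraph.DStep Set.univ)) :=
    ⟨fun _ _ _ h h' => h.trans h'⟩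
  have h2 : IsIrrefl _ (Relation.TransGen (N.toMDigraph.DStep Set.univ)) := ⟨N.acyclic⟩
  haveI := h1
  haveI := h2
  have h3 : WellFounded (Relation.TransGen (N.toMDigraph.DStep Set.univ)) :=
    Finite.wellFounded_of_trans_of_irrefl _
  exact @Subrelation.wf _
    (Relation.TransGen (N.toMDigraph.DStep Set.univ))
    (N.toMDigraph.DStep Set.univ)
    (fun h => Relation.TransGen.single h) h3

lemma exists_leaf_below (N : PhyloNetwork X) (v : N.toMDigraph.V) :
    ∃ x, N.toMDigraph.Above v (N.leaf x) := by
  refine (down_wf N).induction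
    (C := fun v => ∃ x, N.toMDigraph.Above v (N.leaf x)) v ?_
  intro v ih
  by_cases h : ∃ e, N.toMDigraph.src e = v
  · obtain ⟨e, he⟩ := h
    obtain ⟨x, hx⟩ := ih (N.toMDigraph.tgt e) ⟨e, Set.mem_univ e, he, rfl⟩
    exact ⟨x, Relation.ReflTransGen.head ⟨e, Set.mem_univ e, he, rfl⟩ hx⟩
  · have hemp : IsEmpty {e // N.toMDigraph.src e = v} := ⟨fun ⟨e, he⟩ => h ⟨e, he⟩⟩
    have hout : N.toMDigraph.outDeg v = 0 := Nat.card_of_isEmpty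
    have hvroot : v ≠ N.root := by
      intro h'
      have h2 := N.root_out
      rw [← h'] at h2
      omega
    by_cases hleaf : ∃ x, v = N.leaf x
    · obtain ⟨x, rfl⟩ := hleaf
      exact ⟨x, Relation.ReflTransGen.refl⟩
    · rcases N.internal v hvroot (fun x h' => hleaf ⟨x, h'⟩) with ⟨_, h2⟩ | ⟨_, h2⟩ <;>
        omega

lemma root_above (N : PhyloNetwork X) (v : N.toMDigraph.V) :
    N.toMDigraph.Above N.root v := by
  refine (up_wf N).induction (C := fun v => N.toMDigraph.Above N.root v) v ?_
  intro v ih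
  by_cases h : ∃ e, N.toMDigraph.tgt e = v
  · obtain ⟨e, he⟩ := h
    exact Relation.ReflTransGen.tail (ih (N.toMDigraph.src e) ⟨e, Set.mem_univ e, rfl, he⟩)
      ⟨e, Set.mem_univ e, rfl, he⟩
  · have hemp : IsEmpty {e // N.toMDigraph.tgt e = v} := ⟨fun ⟨e, he⟩ => h ⟨e, he⟩⟩
    have hin : N.toMDigraph.inDeg v = 0 := Nat.card_of_isEmpty
    by_cases hroot : v = N.root
    · exact hroot ▸ Relation.ReflTransGen.refl
    · by_cases hleaf : ∃ x, v = N.leaf x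
      · obtain ⟨x, rfl⟩ := hleaf
        have := N.leaf_in x
        omega
      · rcases N.internal v hroot (fun x h' => hleaf ⟨x, h'⟩) with ⟨h1, _⟩ | ⟨h1, _⟩ <;>
          omega

lemma leaf_no_out (N : PhyloNetwork X) (x : X) (e : N.toMDigraph.E) :
    N.toMDigraph.src e ≠ N.leaf x := by
  intro he
  have h0 : Nat.card {e // N.toMDigraph.src e = N.leaf x} = 0 := N.leaf_out x
  rcases Nat.card_eq_zero.1 h0 with hemp | hinf
  · exact hemp.false ⟨e, he⟩
  · exact (Finite.not_infinite inferInstance) hinf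

lemma leaf_in_unique (N : PhyloNetwork X) (x : X) :
    ∃ e0, N.toMDigraph.tgt e0 = N.leaf x ∧
      ∀ e, N.toMDigraph.tgt e = N.leaf x → e = e0 := by
  have h1 : Nat.card {e // N.toMDigraph.tgt e = N.leaf x} = 1 := N.leaf_in x
  rcases Nat.card_eq_one_iff_unique.1 h1 with ⟨hsub, ⟨⟨e0, he0⟩⟩⟩
  exact ⟨e0, he0, fun e he => congrArg Subtype.val (hsub.allEq ⟨e, he⟩ ⟨e0, he0⟩)⟩

lemma leaf_above (N : PhyloNetwork X) (x : X) {w : N.toMDigraph.V}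
    (h : N.toMDigraph.Above (N.leaf x) w) : w = N.leaf x := by
  rcases Relation.ReflTransGen.cases_head h with heq | ⟨m, hstep, _⟩
  · exact heq.symm
  · obtain ⟨e, _, hs, _⟩ := hstep
    exact absurd hs (leaf_no_out N x e)

/-- A blob containing a leaf is a trivial blob consisting of just that leaf. -/
lemma blob_trivial (N : PhyloNetwork X) (B : Subgraph N.toMDigraph)
    (hB : IsBlobIn (top N.toMDigraph) B) {x : X} (hx : N.leaf x ∈ B.verts) :
    ∀ u ∈ B.verts, u = N.leaf x := by
  obtain ⟨e0, he0, huniq⟩ := leaf_in_unique N x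
  intro u hu
  by_contra hne
  have hconn := hB.2.1.2 u hu _ hx
  obtain ⟨g, hg, hor⟩ := conn_last_edge hconn hne
  rcases hor with hsg | htg
  · exact leaf_no_out N x g hsg
  · have hge : g = e0 := huniq g htg
    subst hge
    have hcut : B.IsCutEdge g := by
      refine (cutEdge_iff B hg).2 ?_
      intro hc
      have hsne : N.toMDigraph.src g ≠ N.toMDigraph.tgt g := by
        intro h'
        exact leaf_no_out N x g (h'.trans htg)
      obtain ⟨g', hg', hor'⟩ := conn_last_edge hc hsne
      rcases hor' with h' | h'
      · exact leaf_no_out N x g' (h'.trans htg)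
      · exact hg'.2 (Set.mem_singleton_iff.2 (huniq g' (h'.trans htg)))
    exact hB.2.2.1 g hcut

end PhyloNetwork


/-- Let `N⁺` be a rooted binary phylogenetic network on taxon set `X`, and suppose
a set `Q = {a,b,c,d}` of four distinct taxa determines a blob `B` of `N⁺`.
Let `Y ⊆ X` be any subset containing `Q` which contains at least one taxon
from each connected component, containing a taxon, of the graph obtained from
`N⁺` by deleting all nodes and edges of `B`.  Then `Q` is a B-quartet on the
induced network `N⁺_Y` (represented by the subnetwork of nodes and edges
ancestral to taxa of `Y`). -/
theorem stmt_17 {X : Type} (N : PhyloNetwork X) (a b c d : X)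
    (hpair : List.Pairwise (· ≠ ·) [a, b, c, d])
    (B : Subgraph N.toMDigraph) (hB : IsBlobIn (top N.toMDigraph) B)
    (hdet : DeterminesIn (top N.toMDigraph) B N.leaf ({a, b, c, d} : Set X))
    (Y : Set X) (hQY : ({a, b, c, d} : Set X) ⊆ Y)
    (hY : ∀ x : X, N.leaf x ∉ B.verts →
      ∃ y ∈ Y, Relation.ReflTransGen
        (fun u w => N.toMDigraph.Step {e | e ∉ B.edges} u w ∧
          u ∉ B.verts ∧ w ∉ B.verts)
        (N.leaf x) (N.leaf y)) :
    BQuartetIn (N.inducedSub Y) N.leaf a b c d := by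
  classical
  have hverts : ∀ v ∈ B.verts, ∃ y ∈ Y, N.toMDigraph.Above v (N.leaf y) := by
    intro v hv
    obtain ⟨x, hx⟩ := PhyloNetwork.exists_leaf_below N v
    by_cases hxB : N.leaf x ∈ B.verts
    · have hsingle := PhyloNetwork.blob_trivial N B hB hxB
      have hvx : v = N.leaf x := hsingle v hv
      have hxQ : x ∈ ({a, b, c, d} : Set X) := by
        by_contra hxQ
        obtain ⟨e0, he0, huniq⟩ := PhyloNetwork.leaf_in_unique N x
        have hax : N.leaf a ≠ N.leaf x := by
          intro h
          exact hxQ (by rw [← N.leaf_inj h]; simp)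
        have hbx : N.leaf b ≠ N.leaf x := by
          intro h
          exact hxQ (by rw [← N.leaf_inj h]; simp)
        have habne : a ≠ b := by
          simp only [List.pairwise_cons] at hpair
          exact hpair.1 b (by simp)
        have hsp := (MDigraph.splice huniq (fun e => PhyloNetwork.leaf_no_out N x e) he0
          (N.conn (N.leaf a) (N.leaf b)) hbx).2 hax
        refine hdet a (by simp) b (by simp) habne (hsp.mono ?_)
        intro g hg
        refine ⟨Set.mem_univ g, ?_⟩
        intro hinc
        rcases hinc.2 with ⟨h1, _⟩ | ⟨h1, _⟩
        · exact PhyloNetwork.leaf_no_out N x g (hsingle _ h1)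
        · exact hg.2 (Set.mem_singleton_iff.2 (huniq g (hsingle _ h1)))
      exact ⟨x, hQY hxQ, hvx ▸ Relation.ReflTransGen.refl⟩
    · obtain ⟨y, hyY, hxy0⟩ := hY x hxB
      have hxy : MDigraph.OutConn B (N.leaf x) (N.leaf y) := hxy0
      have hyB : N.leaf y ∉ B.verts := MDigraph.OutConn.not_mem hxy hxB
      rcases MDigraph.dconn_exit (B := B) hx hxB with ⟨hvB, _⟩ | ⟨e, he1, he2, he3, he4, _⟩
      · exact absurd hv hvB
      · rcases MDigraph.dconn_exit (B := B) (PhyloNetwork.root_above N (N.leaf y)) hyB with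
          ⟨hrB, hconn_ry⟩ | ⟨e', h1', h2', h3', _, h5'⟩
        · rcases MDigraph.dconn_enter (B := B) (PhyloNetwork.root_above N v) hrB with
            ⟨hvB', _⟩ | ⟨e2, hb2, hc2, hconn2⟩
          · exact absurd hv hvB'
          · have hcc : MDigraph.OutConn B (N.toMDigraph.tgt e) (N.toMDigraph.src e2) :=
              (he3.trans hxy).trans (hconn_ry.symm.trans hconn2)
            have heq := MDigraph.att_unique hB (Or.inl ⟨rfl, rfl⟩) he1 he2
              (Or.inr ⟨rfl, rfl⟩) hb2 hc2 hcc
            rw [heq] at he1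
            exact absurd he1 hc2
        · have hcc : MDigraph.OutConn B (N.toMDigraph.tgt e) (N.toMDigraph.tgt e') :=
            (he3.trans hxy).trans h3'.symm
          have heq := MDigraph.att_unique hB (Or.inl ⟨rfl, rfl⟩) he1 he2
            (Or.inl ⟨rfl, rfl⟩) h1' h2' hcc
          exact ⟨y, hyY, Relation.ReflTransGen.trans he4 (heq ▸ h5')⟩
  have hBH : B.le (N.inducedSub Y) := by
    constructor
    · intro v hv
      exact hverts v hv
    · intro e heB
      obtain ⟨y, hy, hab⟩ := hverts _ (B.tgt_mem e heB)
      exact ⟨y, hy, hab⟩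
  refine ⟨B, ⟨hBH, hB.2.1, hB.2.2.1,
    fun B'' _ hconn hnocut hBB'' => hB.2.2.2 B'' B''.le_top hconn hnocut hBB''⟩, ?_⟩
  intro s hs t ht hst hconn
  refine hdet s hs t ht hst (hconn.mono ?_)
  intro e he
  refine ⟨Set.mem_univ e, ?_⟩
  intro hinc
  refine he.2 ⟨?_, hinc.2⟩
  refine (MDigraph.cutEdge_iff (N.inducedSub Y) he.1).2 ?_
  intro hc
  have hsub : (N.inducedSub Y).edges \ {e} ⊆ (MDigraph.top N.toMDigraph).edges \ {e} :=
    fun g hg => ⟨Set.mem_univ g, hg.2⟩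
  exact (MDigraph.cutEdge_iff (MDigraph.top N.toMDigraph) (Set.mem_univ e)).1 hinc.1
    (hc.mono hsub)
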